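/- Let n ≥ 1 and let S be a Sperner family on {1,…,n} not consisting of just one singleton, with module h_S. Then: (a) if S contains a singleton (equivalently h_S′(1) > 0), then h_S(t) < t for every t ∈ (0,1); (b) if ⋂_{A ∈ S} A ≠ ∅ (equivalently h_S′(0) > 0), then h_S(t) > t for every t ∈ (0,1). -/
import Mathlib


open MeasureTheory

/-- The Sperner statistic of a family `S` of subsets of `{1,…,n}`:
`H_S(x) = max_{A ∈ S} min_{i ∈ A} x_i`. -/
noncomputable def spernerStat {n : ℕ} (S : Finset (Finset (Fin n))) (hS : S.Nonempty)
    (hne : ∀ A ∈ S, A.Nonempty) (x : Fin n → ℝ) : ℝ :=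
  S.attach.sup' (Finset.attach_nonempty_iff.mpr hS)
    (fun A => A.1.inf' (hne A.1 A.2) x)

/- The module of a Sperner family:
`h_S(t) = Σ_{ε ∈ {0,1}^n, H_S(ε)=0} t^{z(ε)} (1−t)^{n−z(ε)}`, where `z(ε)` is the
number of zero coordinates of `ε`. -/
open scoped Classical in
noncomputable def spernerModule {n : ℕ} (S : Finset (Finset (Fin n))) (hS : S.Nonempty)
    (hne : ∀ A ∈ S, A.Nonempty) (t : ℝ) : ℝ :=
  ∑ ε : Fin n → Bool,
    if spernerStat S hS hne (fun i => if ε i then 1 else 0) = 0 then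
      t ^ (Finset.univ.filter fun i => ε i = false).card *
        (1 - t) ^ (n - (Finset.univ.filter fun i => ε i = false).card)
    else 0

lemma statZeroIff {n : ℕ} (S : Finset (Finset (Fin n))) (hS : S.Nonempty)
    (hne : ∀ A ∈ S, A.Nonempty) (ε : Fin n → Bool) :
    spernerStat S hS hne (fun i => if ε i then 1 else 0) = 0 ↔
      ∀ A ∈ S, ∃ i ∈ A, ε i = false := by
  unfold spernerStat
  set x : Fin n → ℝ := fun i => if ε i then 1 else 0 with hx
  have hx0 : ∀ i, 0 ≤ x i := fun i => by by_cases h : ε i <;> simp [hx, h]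
  constructor
  · intro h A hA
    have h1 : A.inf' (hne A hA) x ≤ 0 := by
      rw [← h]; exact Finset.le_sup' (fun A : {x // x ∈ S} => A.1.inf' (hne A.1 A.2) x) (Finset.mem_attach _ ⟨A, hA⟩)
    obtain ⟨i, hi, hix⟩ := Finset.exists_mem_eq_inf' (hne A hA) x
    refine ⟨i, hi, ?_⟩
    rw [hix] at h1
    by_contra hc
    simp only [Bool.not_eq_false] at hc
    simp [hx, hc] at h1
    linarith
  · intro h
    apply le_antisymm
    · apply Finset.sup'_le
      rintro ⟨A, hA⟩ _
      obtain ⟨i, hi, hif⟩ := h A hA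
      calc A.inf' (hne A hA) x ≤ x i := Finset.inf'_le x hi
        _ = 0 := by simp [hx, hif]
    · obtain ⟨A, hA⟩ := hS
      calc (0:ℝ) ≤ A.inf' (hne A hA) x := Finset.le_inf' _ _ fun i _ => hx0 i
        _ ≤ _ := Finset.le_sup' (fun A : {x // x ∈ S} => A.1.inf' (hne A.1 A.2) x) (Finset.mem_attach _ ⟨A, hA⟩)

lemma weight_eq {n : ℕ} (t : ℝ) (ε : Fin n → Bool) :
    t ^ (Finset.univ.filter fun i => ε i = false).card *
      (1 - t) ^ (n - (Finset.univ.filter fun i => ε i = false).card)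
    = ∏ i : Fin n, (if ε i then 1 - t else t) := by
  rw [Finset.prod_ite, Finset.prod_const, Finset.prod_const]
  have h1 : (Finset.univ.filter fun i : Fin n => ¬ ε i = true)
      = (Finset.univ.filter fun i => ε i = false) := by simp
  have h2 : (Finset.univ.filter fun i : Fin n => ε i = true).card
      = n - (Finset.univ.filter fun i : Fin n => ε i = false).card := by
    have := Finset.card_filter_add_card_filter_not
      (s := (Finset.univ : Finset (Fin n))) (p := fun i => ε i = true)
    simp only [Finset.card_univ, Fintype.card_fin, Bool.not_eq_true] at this
    omega
  rw [h1, h2, mul_comm]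

lemma sum_cond {n : ℕ} (t : ℝ) (i0 : Fin n) :
    ∑ ε : Fin n → Bool, (if ε i0 = false then ∏ i, (if ε i then 1 - t else t) else 0) = t := by
  have key : ∀ ε : Fin n → Bool,
      (if ε i0 = false then ∏ i, (if ε i then 1 - t else t) else 0)
        = ∏ i, (if i = i0 then (if ε i then 0 else t) else (if ε i then 1 - t else t)) := by
    intro ε
    by_cases h : ε i0 = false
    · rw [if_pos h]
      refine Finset.prod_congr rfl fun i _ => ?_
      by_cases hi : i = i0
      · subst hi; simp [h]
      · simp [hi]
    · rw [if_neg h]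
      symm
      apply Finset.prod_eq_zero (Finset.mem_univ i0)
      simp only [Bool.not_eq_false] at h
      simp [h]
  rw [Finset.sum_congr rfl fun ε _ => key ε]
  rw [← Fintype.prod_sum (fun (i : Fin n) (b : Bool) =>
    if i = i0 then (if b then 0 else t) else (if b then 1 - t else t))]
  have h3 : ∀ i : Fin n,
      (∑ b : Bool, (if i = i0 then (if b then 0 else t) else (if b then 1 - t else t)))
        = if i = i0 then t else 1 := by
    intro i
    by_cases hi : i = i0 <;> simp [hi] 
  rw [Finset.prod_congr rfl fun i _ => h3 i]
  simp


/-- For a Sperner family not consisting of just one singleton: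
(a) if `S` contains a singleton then `h_S(t) < t` on `(0,1)`;
(b) if `⋂_{A ∈ S} A ≠ ∅` then `h_S(t) > t` on `(0,1)`. -/
theorem sperner_module_lower_and_upper_cases
    (n : ℕ) (hn : 1 ≤ n) (S : Finset (Finset (Fin n))) (hS : S.Nonempty)
    (hne : ∀ A ∈ S, A.Nonempty) (hsp : ∀ A ∈ S, ∀ B ∈ S, A ⊆ B → A = B)
    (hnot : ¬ ∃ i : Fin n, S = {({i} : Finset (Fin n))}) :
    ((∃ A ∈ S, A.card = 1) →
      ∀ t ∈ Set.Ioo (0 : ℝ) 1, spernerModule S hS hne t < t) ∧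
    ((S.inf' hS id).Nonempty →
      ∀ t ∈ Set.Ioo (0 : ℝ) 1, t < spernerModule S hS hne t) := by
  classical
  constructor
  · rintro ⟨A, hA, hcard⟩ t ⟨ht0, ht1⟩
    obtain ⟨i0, rfl⟩ := Finset.card_eq_one.mp hcard
    have hexB : ∃ B ∈ S, B ≠ ({i0} : Finset (Fin n)) := by
      by_contra h
      push_neg at h
      exact hnot ⟨i0, Finset.eq_singleton_iff_unique_mem.mpr ⟨hA, h⟩⟩
    obtain ⟨B, hB, hBne⟩ := hexB
    have hi0B : i0 ∉ B := by
      intro h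
      exact hBne ((hsp _ hA _ hB (Finset.singleton_subset_iff.mpr h)).symm)
    set ε0 : Fin n → Bool := fun i => decide (i ≠ i0) with hε0
    have hw : ∀ ε : Fin n → Bool, (0:ℝ) <
        t ^ (Finset.univ.filter fun i => ε i = false).card *
          (1 - t) ^ (n - (Finset.univ.filter fun i => ε i = false).card) := by
      intro ε; exact mul_pos (pow_pos ht0 _) (pow_pos (by linarith) _)
    have hsum := sum_cond (n := n) t i0
    have ht : t = ∑ ε : Fin n → Bool, (if ε i0 = false then
        t ^ (Finset.univ.filter fun i => ε i = false).card *
          (1 - t) ^ (n - (Finset.univ.filter fun i => ε i = false).card) else 0) := by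
      rw [Finset.sum_congr rfl fun (ε : Fin n → Bool) _ => by rw [weight_eq t ε], hsum]
    have hlt : spernerModule S hS hne t < ∑ ε : Fin n → Bool, (if ε i0 = false then
        t ^ (Finset.univ.filter fun i => ε i = false).card *
          (1 - t) ^ (n - (Finset.univ.filter fun i => ε i = false).card) else 0) := by
      rw [spernerModule]
      apply Finset.sum_lt_sum
      · intro ε _
        by_cases h : spernerStat S hS hne (fun i => if ε i then 1 else 0) = 0
        · obtain ⟨i, hi, hif⟩ := (statZeroIff S hS hne ε).mp h _ hA
          rw [Finset.mem_singleton] at hi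
          subst hi
          rw [if_pos h, if_pos hif]
        · rw [if_neg h]
          by_cases h2 : ε i0 = false
          · rw [if_pos h2]; exact (hw ε).le
          · rw [if_neg h2]
      · refine ⟨ε0, Finset.mem_univ _, ?_⟩
        have h1 : ¬ spernerStat S hS hne (fun i => if ε0 i then 1 else 0) = 0 := by
          rw [statZeroIff]
          push_neg
          refine ⟨B, hB, fun i hi => ?_⟩
          have : i ≠ i0 := fun h => hi0B (h ▸ hi)
          simp [hε0, this]
        have h2 : ε0 i0 = false := by simp [hε0]
        rw [if_neg h1, if_pos h2]
        exact hw ε0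
    rw [← ht] at hlt
    exact hlt
  · rintro ⟨j, hj⟩ t ⟨ht0, ht1⟩
    have hjA : ∀ A ∈ S, j ∈ A := by
      intro A hA
      exact Finset.mem_of_subset (Finset.inf'_le id hA) hj
    have hAj : ∀ A ∈ S, ∃ i ∈ A, i ≠ j := by
      intro A hA
      by_contra h
      push_neg at h
      have hAeq : A = ({j} : Finset (Fin n)) := by
        apply Finset.eq_singleton_iff_unique_mem.mpr ⟨hjA A hA, h⟩
      apply hnot
      refine ⟨j, Finset.eq_singleton_iff_unique_mem.mpr ⟨hAeq ▸ hA, fun B hB => ?_⟩⟩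
      exact (hsp _ (hAeq ▸ hA) _ hB (Finset.singleton_subset_iff.mpr (hjA B hB))).symm
    set ε0 : Fin n → Bool := fun i => decide (i = j) with hε0
    have hw : ∀ ε : Fin n → Bool, (0:ℝ) <
        t ^ (Finset.univ.filter fun i => ε i = false).card *
          (1 - t) ^ (n - (Finset.univ.filter fun i => ε i = false).card) := by
      intro ε; exact mul_pos (pow_pos ht0 _) (pow_pos (by linarith) _)
    have hsum := sum_cond (n := n) t j
    have ht : t = ∑ ε : Fin n → Bool, (if ε j = false then
        t ^ (Finset.univ.filter fun i => ε i = false).card *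
          (1 - t) ^ (n - (Finset.univ.filter fun i => ε i = false).card) else 0) := by
      rw [Finset.sum_congr rfl fun (ε : Fin n → Bool) _ => by rw [weight_eq t ε], hsum]
    have hlt : (∑ ε : Fin n → Bool, (if ε j = false then
        t ^ (Finset.univ.filter fun i => ε i = false).card *
          (1 - t) ^ (n - (Finset.univ.filter fun i => ε i = false).card) else 0))
        < spernerModule S hS hne t := by
      rw [spernerModule]
      apply Finset.sum_lt_sum
      · intro ε _
        by_cases h : ε j = false
        · rw [if_pos h]
          have : spernerStat S hS hne (fun i => if ε i then 1 else 0) = 0 := by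
            rw [statZeroIff]
            exact fun A hA => ⟨j, hjA A hA, h⟩
          rw [if_pos this]
        · rw [if_neg h]
          by_cases h2 : spernerStat S hS hne (fun i => if ε i then 1 else 0) = 0
          · rw [if_pos h2]; exact (hw ε).le
          · rw [if_neg h2]
      · refine ⟨ε0, Finset.mem_univ _, ?_⟩
        have h1 : spernerStat S hS hne (fun i => if ε0 i then 1 else 0) = 0 := by
          rw [statZeroIff]
          intro A hA
          obtain ⟨i, hi, hij⟩ := hAj A hA
          exact ⟨i, hi, by simp [hε0, hij]⟩
        have h2 : ¬ ε0 j = false := by simp [hε0]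
        rw [if_neg h2, if_pos h1]
        exact hw ε0
    rw [← ht] at hlt
    exact hlt
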